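/- Let θ₁, θ₂ ∈ ℝ with θ₁ ≠ θ₂ and let c₁, c₂ > 0. Define f : ℝ → ℝ by f(θ) = c₁ · e^{−(θ−θ₁)²/4} + c₂ · e^{−(θ−θ₂)²/4}. Then f attains its maximum over ℝ, and no global maximizer of f belongs to {θ₁, θ₂}; in particular, Orthogonal Matching Pursuit applied to the positive combination y = c₁ a(θ₁) + c₂ a(θ₂) of two normalized Gaussian atoms a(θ) = π^{−1/4} e^{−(·−θ)²/2} ∈ L²(ℝ), whose correlation function is θ ↦ |⟨a(θ), y⟩| = f(θ), never selects a parameter in {θ₁, θ₂} at its first iteration. -/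

import Mathlib

open Filter Real

private lemma gauss_tendsto' (a : ℝ) :
    Tendsto (fun θ : ℝ => Real.exp (-((θ - a) ^ 2 / 4))) (cocompact ℝ) (nhds 0) := by
  have h0 : Tendsto (fun θ : ℝ => θ - a) (cocompact ℝ) (cocompact ℝ) := by
    have h : Tendsto (⇑(Homeomorph.subRight a)) (cocompact ℝ)
        (map (⇑(Homeomorph.subRight a)) (cocompact ℝ)) := tendsto_map
    rw [(Homeomorph.subRight a).map_cocompact] at h
    simpa using h
  have h1 : Tendsto (fun θ : ℝ => |θ - a|) (cocompact ℝ) atTop := by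
    simpa [Real.norm_eq_abs, Function.comp_def] using tendsto_norm_cocompact_atTop.comp h0
  have h2 : Tendsto (fun θ : ℝ => (θ - a) ^ 2 / 4) (cocompact ℝ) atTop := by
    apply Tendsto.atTop_div_const (by norm_num)
    have := (tendsto_pow_atTop (n := 2) two_ne_zero).comp h1
    simpa only [Function.comp_def, sq_abs] using this
  exact Real.tendsto_exp_atBot.comp (tendsto_neg_atTop_atBot.comp h2)

private lemma gauss_hasDerivAt' (a c : ℝ) (θ : ℝ) :
    HasDerivAt (fun θ : ℝ => c * Real.exp (-((θ - a) ^ 2 / 4)))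
      (c * Real.exp (-((θ - a) ^ 2 / 4)) * (-((θ - a) / 2))) θ := by
  have h1 : HasDerivAt (fun θ : ℝ => -((θ - a) ^ 2 / 4)) (-((θ - a) / 2)) θ := by
    have h : HasDerivAt (fun θ : ℝ => θ - a) 1 θ := (hasDerivAt_id θ).sub_const a
    have := ((h.pow 2).div_const 4).neg
    refine this.congr_deriv ?_
    ring
  have := (h1.exp).const_mul c
  refine this.congr_deriv ?_
  ring

/-- for two distinct Gaussian atoms and positive coefficients, the OMP
first-iteration correlation `f(θ) = c₁ e^{-(θ-θ₁)²/4} + c₂ e^{-(θ-θ₂)²/4}` attains its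
maximum over `ℝ`, but no global maximizer belongs to `{θ₁, θ₂}`: OMP never selects a
true parameter at its first iteration. -/
theorem gaussian_omp_first_iteration_fails
    (θ₁ θ₂ : ℝ) (hne : θ₁ ≠ θ₂) (c₁ c₂ : ℝ) (hc₁ : 0 < c₁) (hc₂ : 0 < c₂)
    (f : ℝ → ℝ)
    (hf : ∀ θ : ℝ, f θ =
      c₁ * Real.exp (-((θ - θ₁) ^ 2 / 4)) + c₂ * Real.exp (-((θ - θ₂) ^ 2 / 4))) :
    (∃ θm : ℝ, ∀ θ : ℝ, f θ ≤ f θm) ∧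
    ∀ θm : ℝ, (∀ θ : ℝ, f θ ≤ f θm) → θm ≠ θ₁ ∧ θm ≠ θ₂ := by
  have hfeq : f = fun θ => c₁ * Real.exp (-((θ - θ₁) ^ 2 / 4))
      + c₂ * Real.exp (-((θ - θ₂) ^ 2 / 4)) := funext hf
  subst hfeq
  set f : ℝ → ℝ := fun θ => c₁ * Real.exp (-((θ - θ₁) ^ 2 / 4))
      + c₂ * Real.exp (-((θ - θ₂) ^ 2 / 4)) with hfdef
  have hcont : Continuous f := by
    apply Continuous.add <;> exact (continuous_const.mul (by fun_prop))
  have htend : Tendsto f (cocompact ℝ) (nhds 0) := by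
    have := ((gauss_tendsto' θ₁).const_mul c₁).add ((gauss_tendsto' θ₂).const_mul c₂)
    simpa using this
  -- derivative nonvanishing criterion
  have key : ∀ a : ℝ, (∀ θ : ℝ, f θ ≤ f a) → a ≠ θ₁ ∧ a ≠ θ₂ := by
    intro a hmax
    have hloc : IsLocalMax f a := Filter.Eventually.of_forall hmax
    have hd : HasDerivAt f
        (c₁ * Real.exp (-((a - θ₁) ^ 2 / 4)) * (-((a - θ₁) / 2))
          + c₂ * Real.exp (-((a - θ₂) ^ 2 / 4)) * (-((a - θ₂) / 2))) a :=
      (gauss_hasDerivAt' θ₁ c₁ a).add (gauss_hasDerivAt' θ₂ c₂ a)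
    have hzero := hloc.hasDerivAt_eq_zero hd
    constructor
    · rintro rfl
      rw [sub_self] at hzero
      norm_num at hzero
      rcases hzero with h | h
      · exact absurd h hc₂.ne'
      · exact absurd h (sub_ne_zero.mpr hne)
    · rintro rfl
      rw [sub_self] at hzero
      norm_num at hzero
      rcases hzero with h | h
      · exact absurd h hc₁.ne'
      · exact absurd h (sub_ne_zero.mpr hne.symm)
  refine ⟨?_, key⟩
  apply hcont.exists_forall_ge' θ₁
  have hlt : ∀ᶠ x in cocompact ℝ, f x < c₁ := htend.eventually_lt_const hc₁
  filter_upwards [hlt] with x hx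
  have : c₁ ≤ f θ₁ := by
    have h1 : (0:ℝ) < Real.exp (-((θ₁ - θ₂) ^ 2 / 4)) := Real.exp_pos _
    simp only [hfdef, sub_self]
    norm_num
    nlinarith [h1]
  linarith
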